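/- Let m ≥ r ≥ 3 and 0 ≤ f ≤ C(m,r). If (m,f) cannot be realised as a hypergraph obtained from a complete r-graph by deleting at most m edges and adding isolated vertices, then σ_r(m,f) = 0. In particular, if there is no x ∈ {0,…,m} with 0 ≤ C(x,r) − f < m, then σ_r(m,f) = 0. -/

import Mathlib

open Finset
open scoped Classical

/-- `(n,e) →_r (m,f)`: every `r`-uniform hypergraph on `n` vertices with `e` edges
has an induced sub-hypergraph on `m` vertices with exactly `f` edges. -/
def PairArrows (r n e m f : ℕ) : Prop :=
  ∀ G : Finset (Finset (Fin n)), (∀ s ∈ G, s.card = r) → G.card = e →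
    ∃ S : Finset (Fin n), S.card = m ∧ (G.filter (fun t => t ⊆ S)).card = f

/-- The density `σ_r(m,f)`. -/
noncomputable def sigmaR (r m f : ℕ) : ℝ :=
  Filter.limsup
    (fun n : ℕ =>
      (((Finset.range (n.choose r + 1)).filter (fun e => PairArrows r n e m f)).card : ℝ) /
        (n.choose r : ℝ))
    Filter.atTop
/-- The pair `(m,f)` can be realised as a complete `r`-graph on some vertex set `K`
with the edges of an `≤ m`-edge `r`-graph removed, together with isolated vertices. -/
def CoCliqueFew (r m f : ℕ) : Prop :=
  ∃ (K : Finset (Fin m)) (H : Finset (Finset (Fin m))),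
    H ⊆ K.powersetCard r ∧ H.card ≤ m ∧
    K.card.choose r = f + H.card

-- C(t,r) ≥ C(t-k, r-k) for t ≥ r
lemma aux_choose_sub_le (t r k : ℕ) (htr : r ≤ t) (hk : k ≤ r) :
    (t - k).choose (r - k) ≤ t.choose r := by
  induction k with
  | zero => simp
  | succ j ih =>
    have hj : j ≤ r := by omega
    refine le_trans ?_ (ih hj)
    -- C(t-j-1, r-j-1) ≤ C(t-j, r-j), with t-j ≥ r-j
    rcases Nat.eq_zero_or_pos (r - j) with h0 | hpos
    · have : r - (j+1) = 0 := by omega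
      rw [this, h0]; simp
    · have h1 : t - j = (t - (j+1)) + 1 := by omega
      have h2 : r - j = (r - (j+1)) + 1 := by omega
      rw [h1, h2, Nat.choose_succ_succ]
      exact Nat.le_add_right _ _

-- eventually C(t,r) ≥ t*A
lemma aux_linear_le_choose (r A : ℕ) (hr : 3 ≤ r) :
    ∀ t, 2*r + 4*A + 2 ≤ t → t * A ≤ t.choose r := by
  intro t ht
  have htr : r ≤ t := by omega
  have h1 : (t - (r-2)).choose (r - (r-2)) ≤ t.choose r :=
    aux_choose_sub_le t r (r-2) htr (by omega)
  have h2 : r - (r-2) = 2 := by omega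
  rw [h2] at h1
  set s := t - (r-2) with hs
  -- 2 * C(s,2) = s * (s-1)
  have hev : 2 ∣ s * (s - 1) := by
    have hs1 : 1 ≤ s := by omega
    have : Even ((s-1) * ((s-1) + 1)) := Nat.even_mul_succ_self (s-1)
    have h3 : (s-1) * ((s-1)+1) = s * (s-1) := by
      rw [show (s-1)+1 = s by omega]; ring
    rw [h3] at this
    exact this.two_dvd
  have hc2 : 2 * s.choose 2 = s * (s - 1) := by
    rw [Nat.choose_two_right]
    exact Nat.mul_div_cancel' hev
  -- s ≥ 4A and 2(s-1) ≥ t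
  have hsA : 4 * A ≤ s := by omega
  have hst : t ≤ 2 * (s - 1) := by omega
  have key : 2 * (t * A) ≤ s * (s - 1) := by
    calc 2 * (t * A) = t * (2 * A) := by ring
      _ ≤ (2 * (s-1)) * (2 * A) := Nat.mul_le_mul_right _ hst
      _ = (s-1) * (4 * A) := by ring
      _ ≤ (s-1) * s := Nat.mul_le_mul_left _ hsA
      _ = s * (s-1) := by ring
  omega

lemma aux_desc_id : ∀ (k D N : ℕ), k ≤ D → D ≤ N →
    D.descFactorial k * N.choose D = N.descFactorial k * (N - k).choose (D - k) := by
  intro k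
  induction k with
  | zero => simp
  | succ j ih =>
    intro D N h1 h2
    have e1 := ih D N (by omega) h2
    have key : (N - j) * (N - j - 1).choose (D - j - 1) = (N - j).choose (D - j) * (D - j) := by
      have h3 := Nat.add_one_mul_choose_eq (N - j - 1) (D - j - 1)
      rw [show N - j - 1 + 1 = N - j by omega] at h3
      rw [show D - j - 1 + 1 = D - j by omega] at h3
      exact h3
    rw [Nat.descFactorial_succ, Nat.descFactorial_succ]
    rw [show N - (j+1) = N - j - 1 by omega, show D - (j+1) = D - j - 1 by omega]
    calc (D - j) * D.descFactorial j * N.choose D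
        = (D - j) * (D.descFactorial j * N.choose D) := by ring
      _ = (D - j) * (N.descFactorial j * (N - j).choose (D - j)) := by rw [e1]
      _ = N.descFactorial j * ((N - j).choose (D - j) * (D - j)) := by ring
      _ = N.descFactorial j * ((N - j) * (N - j - 1).choose (D - j - 1)) := by rw [key]
      _ = (N - j) * N.descFactorial j * (N - j - 1).choose (D - j - 1) := by ring

lemma aux_exists_sparse (r m : ℕ) (hr : 3 ≤ r) (hm : r ≤ m) :
    ∃ T0 : ℕ, r ≤ T0 ∧ ∀ t, T0 ≤ t → ∀ d, d ≤ (t-1).choose (r-1) →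
    ∀ (n : ℕ) (T : Finset (Fin n)), T.card = t →
      ∃ H, H ⊆ T.powersetCard r ∧ H.card = d ∧
        ∀ S : Finset (Fin n), S.card ≤ m → (H.filter (fun A => A ⊆ S)).card < m := by
  classical
  set K := (m.choose r).choose m with hK
  set Cs := K * (2*r+1)^m + m + 1 with hCs
  set A := Cs + r*m + m + 1 with hA
  refine ⟨2*r + 4*A + m + 2, by omega, ?_⟩
  intro t ht d hd n T hT
  have hAc : ∀ t', 2*r + 4*A + 2 ≤ t' → t' * A ≤ t'.choose r := aux_linear_le_choose r A hr
  have hNA : t * A ≤ t.choose r := hAc t (by omega)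
  set N := t.choose r with hN
  set gap := (t-1).choose (r-1) with hgap
  set D := gap + Cs with hD
  have htm : m ≤ t := by omega
  have htr : r ≤ t := by omega
  -- t * gap = N * r
  have tgap : t * gap = N * r := by
    have h3 := Nat.add_one_mul_choose_eq (t-1) (r-1)
    rw [show t - 1 + 1 = t by omega, show r - 1 + 1 = r by omega] at h3
    exact h3
  have hNlarge : t * Cs + t * (r*m) + t * m + t ≤ N := by
    have : t * A = t * Cs + t * (r*m) + t * m + t := by rw [hA]; ring
    omega
  have htCs : Cs ≤ t * Cs := Nat.le_mul_of_pos_left _ (by omega)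
  have hrm : r * m ≤ t * (r*m) := Nat.le_mul_of_pos_left _ (by omega)
  have htm' : m ≤ t * m := Nat.le_mul_of_pos_left _ (by omega)
  have hmN : m ≤ N := by omega
  have hgapN : 2 * gap ≤ N := by
    have h4 : (2*r) * gap ≤ t * gap := Nat.mul_le_mul_right _ (by omega)
    rw [tgap] at h4
    have h5 : (2*r) * gap = r * (2 * gap) := by ring
    have h6 : N * r = r * N := by ring
    rw [h5, h6] at h4
    exact Nat.le_of_mul_le_mul_left h4 (by omega)
  have hDN : D ≤ N := by omega
  have hmD : m ≤ D := by omega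
  -- star inequality : t * D ≤ (2r+1) * (N + 1 - m)
  have hstar : t * D ≤ (2*r+1) * (N + 1 - m) := by
    set P := N - m with hP
    have hNP : N = P + m := by omega
    have hPbig : r * m + t * Cs ≤ P := by omega
    have e2 : t * D = r * P + r * m + t * Cs := by
      have : t * D = t * gap + t * Cs := by rw [hD]; ring
      rw [this, tgap, hNP]; ring
    have e3 : N + 1 - m = P + 1 := by omega
    rw [e2, e3]
    have e4 : (2*r+1) * (P+1) = r*P + (r*P + P) + 2*r + 1 := by ring
    have e5 : r*m + t*Cs ≤ r*P + P := by
      have : P ≤ r * P + P := by omega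
      omega
    omega
  -- core numeric chain
  have core : t.choose m * D.descFactorial m ≤ (2*r+1)^m * N.descFactorial m := by
    calc t.choose m * D.descFactorial m
        ≤ t^m * D^m := Nat.mul_le_mul (Nat.choose_le_pow t m) (Nat.descFactorial_le_pow D m)
      _ = (t*D)^m := (mul_pow t D m).symm
      _ ≤ ((2*r+1) * (N + 1 - m))^m := Nat.pow_le_pow_left hstar m
      _ = (2*r+1)^m * (N + 1 - m)^m := mul_pow _ _ m
      _ ≤ (2*r+1)^m * N.descFactorial m :=
          Nat.mul_le_mul_left _ (Nat.pow_sub_le_descFactorial N m)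
  have hDdfpos : 0 < D.descFactorial m := by
    rcases Nat.eq_zero_or_pos (D.descFactorial m) with h | h
    · rw [Nat.descFactorial_eq_zero_iff_lt] at h; omega
    · exact h
  -- main counting inequality
  have main_num : t.choose m * K * (N - m).choose (D - m) ≤ Cs * N.choose D := by
    have h7 : t.choose m * (N - m).choose (D - m) ≤ (2*r+1)^m * N.choose D := by
      have h8 : (t.choose m * (N - m).choose (D - m)) * D.descFactorial m
          ≤ ((2*r+1)^m * N.choose D) * D.descFactorial m := by
        calc (t.choose m * (N - m).choose (D - m)) * D.descFactorial m
            = (t.choose m * D.descFactorial m) * (N - m).choose (D - m) := by ring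
          _ ≤ ((2*r+1)^m * N.descFactorial m) * (N - m).choose (D - m) :=
              Nat.mul_le_mul_right _ core
          _ = (2*r+1)^m * (N.descFactorial m * (N - m).choose (D - m)) := by ring
          _ = (2*r+1)^m * (D.descFactorial m * N.choose D) := by rw [← aux_desc_id m D N hmD hDN]
          _ = ((2*r+1)^m * N.choose D) * D.descFactorial m := by ring
      exact Nat.le_of_mul_le_mul_right h8 hDdfpos
    calc t.choose m * K * (N - m).choose (D - m)
        = K * (t.choose m * (N - m).choose (D - m)) := by ring
      _ ≤ K * ((2*r+1)^m * N.choose D) := Nat.mul_le_mul_left _ h7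
      _ = (K * (2*r+1)^m) * N.choose D := by ring
      _ ≤ Cs * N.choose D := Nat.mul_le_mul_right _ (by omega)
  -- combinatorial part
  set E := T.powersetCard r with hE
  have hEcard : E.card = N := by rw [hE, card_powersetCard, hT]
  set Cfgs := (T.powersetCard m).biUnion
      (fun S => (S.powersetCard r).powersetCard m) with hCfg
  have hCfgs_card : Cfgs.card ≤ t.choose m * K := by
    refine le_trans (card_biUnion_le) ?_
    have hper : ∀ S ∈ T.powersetCard m, ((S.powersetCard r).powersetCard m).card = K := by
      intro S hS
      rw [mem_powersetCard] at hS
      rw [card_powersetCard, card_powersetCard, hS.2, hK]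
    rw [Finset.sum_congr rfl hper, Finset.sum_const, card_powersetCard, hT, smul_eq_mul]
  set Om := E.powersetCard D with hOm
  have hOmcard : Om.card = N.choose D := by rw [hOm, card_powersetCard, hEcard]
  have hOmpos : 0 < Om.card := by rw [hOmcard]; exact Nat.choose_pos hDN
  -- per-config count
  have hper : ∀ E' ∈ Cfgs, (Om.filter (fun H => E' ⊆ H)).card ≤ (N - m).choose (D - m) := by
    intro E' hE'
    obtain ⟨S, hS, hE'2⟩ := mem_biUnion.1 hE'
    rw [mem_powersetCard] at hS
    rw [mem_powersetCard] at hE'2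
    obtain ⟨hE'sub, hE'card⟩ := hE'2
    have hE'E : E' ⊆ E := hE'sub.trans (powersetCard_mono hS.1)
    have htarget : ((E \ E').powersetCard (D - m)).card = (N - m).choose (D - m) := by
      rw [card_powersetCard, card_sdiff_of_subset hE'E, hEcard, hE'card]
    rw [← htarget]
    apply card_le_card_of_injOn (fun H => H \ E')
    · intro H hH
      rw [mem_coe, mem_filter] at hH
      obtain ⟨hHOm, hEH⟩ := hH
      rw [hOm, mem_powersetCard] at hHOm
      simp only [mem_coe, mem_powersetCard]
      constructor
      · exact sdiff_subset_sdiff hHOm.1 Subset.rfl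
      · rw [card_sdiff_of_subset hEH, hHOm.2, hE'card]
    · intro a ha b hb hab
      rw [mem_coe, mem_filter] at ha hb
      have : a \ E' ∪ E' = b \ E' ∪ E' := by rw [show a \ E' = b \ E' from hab]
      rwa [sdiff_union_of_subset ha.2, sdiff_union_of_subset hb.2] at this
  -- exchange the double count
  have hsum : ∑ H ∈ Om, (Cfgs.filter (fun E' => E' ⊆ H)).card
      ≤ Cfgs.card * (N - m).choose (D - m) := by
    calc ∑ H ∈ Om, (Cfgs.filter (fun E' => E' ⊆ H)).card
        = ∑ H ∈ Om, ∑ E' ∈ Cfgs, if E' ⊆ H then 1 else 0 := by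
          refine Finset.sum_congr rfl fun H _ => ?_
          rw [Finset.card_filter]
      _ = ∑ E' ∈ Cfgs, ∑ H ∈ Om, if E' ⊆ H then 1 else 0 := Finset.sum_comm
      _ = ∑ E' ∈ Cfgs, (Om.filter (fun H => E' ⊆ H)).card := by
          refine Finset.sum_congr rfl fun E' _ => ?_
          rw [Finset.card_filter]
      _ ≤ ∑ _E' ∈ Cfgs, (N - m).choose (D - m) := Finset.sum_le_sum hper
      _ = Cfgs.card * (N - m).choose (D - m) := by
          rw [Finset.sum_const, smul_eq_mul]
  have hsum2 : ∑ H ∈ Om, (Cfgs.filter (fun E' => E' ⊆ H)).card ≤ Cs * Om.card := by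
    rw [hOmcard]
    refine hsum.trans (le_trans ?_ main_num)
    exact Nat.mul_le_mul_right _ hCfgs_card
  -- find a good H0
  have hH0 : ∃ H0 ∈ Om, (Cfgs.filter (fun E' => E' ⊆ H0)).card ≤ Cs := by
    by_contra hcon
    push_neg at hcon
    have : Om.card * (Cs + 1) ≤ ∑ H ∈ Om, (Cfgs.filter (fun E' => E' ⊆ H)).card := by
      refine le_trans (le_of_eq ?_) (Finset.card_nsmul_le_sum Om _ _ (fun H hH => hcon H hH))
      rw [smul_eq_mul]
    have h9 : Om.card * (Cs + 1) = Cs * Om.card + Om.card := by ring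
    omega
  obtain ⟨H0, hH0Om, hH0bad⟩ := hH0
  rw [hOm, mem_powersetCard] at hH0Om
  obtain ⟨hH0E, hH0card⟩ := hH0Om
  -- delete one edge from each bad configuration
  set rep : Finset (Finset (Fin n)) → Finset (Fin n) :=
    fun E' => if h : E'.Nonempty then h.choose else ∅ with hrep
  set R := (Cfgs.filter (fun E' => E' ⊆ H0)).image rep with hR
  have hRcard : R.card ≤ Cs := le_trans (card_image_le) hH0bad
  set H1 := H0 \ R with hH1
  have hH1card : gap ≤ H1.card := by
    have h10 := le_card_sdiff R H0
    rw [← hH1] at h10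
    omega
  -- H1 contains no configuration
  have hH1free : ∀ E' ∈ Cfgs, ¬ (E' ⊆ H1) := by
    intro E' hE' hsub
    have hE'H0 : E' ⊆ H0 := hsub.trans (sdiff_subset)
    have hne : E'.Nonempty := by
      obtain ⟨S, hS, hE'2⟩ := mem_biUnion.1 hE'
      rw [mem_powersetCard] at hE'2
      rw [← card_pos, hE'2.2]
      omega
    have hrepE : rep E' ∈ R := by
      rw [hR]
      exact mem_image_of_mem rep (mem_filter.2 ⟨hE', hE'H0⟩)
    have hrepE' : rep E' ∈ E' := by
      rw [hrep]
      simp only [dif_pos hne]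
      exact hne.choose_spec
    have := hsub hrepE'
    rw [hH1, mem_sdiff] at this
    exact this.2 hrepE
  -- extract H of size d
  obtain ⟨H, hHsub, hHcard⟩ := Finset.exists_subset_card_eq (le_trans hd hH1card)
  have hHE : H ⊆ E := hHsub.trans ((sdiff_subset).trans hH0E)
  refine ⟨H, hHE, hHcard, ?_⟩
  intro S hS
  by_contra hge
  push_neg at hge
  obtain ⟨E', hE'sub, hE'card⟩ :=
    Finset.exists_subset_card_eq (s := H.filter (fun A => A ⊆ S)) hge
  -- build the m-set S1 ⊆ T containing S ∩ T
  have hST : (S ∩ T).card ≤ m := le_trans (card_le_card inter_subset_left) hS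
  obtain ⟨S1, hS1a, hS1b, hS1card⟩ :=
    Finset.exists_subsuperset_card_eq (inter_subset_right : S ∩ T ⊆ T) hST (by omega)
  have hE'Cfgs : E' ∈ Cfgs := by
    rw [hCfg]
    refine mem_biUnion.2 ⟨S1, mem_powersetCard.2 ⟨hS1b, hS1card⟩,
      mem_powersetCard.2 ⟨?_, hE'card⟩⟩
    intro B hB
    have hB2 := hE'sub hB
    rw [mem_filter] at hB2
    obtain ⟨hBH, hBS⟩ := hB2
    have hBE := hHE hBH
    rw [hE, mem_powersetCard] at hBE
    rw [mem_powersetCard]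
    refine ⟨?_, hBE.2⟩
    exact (subset_inter hBS hBE.1).trans hS1a
  refine hH1free E' hE'Cfgs ?_
  exact (hE'sub.trans (filter_subset _ _)).trans hHsub

-- continuation (will concatenate)
lemma aux_not_arrows (r m f : ℕ) (hr : 3 ≤ r) (hm : r ≤ m)
    (hyp : ∀ x, x ≤ m → x.choose r < f ∨ f + m ≤ x.choose r) :
    ∃ E0 : ℕ, ∀ n e, E0 < e → e ≤ n.choose r → ¬ PairArrows r n e m f := by
  classical
  obtain ⟨T0, hT0r, hT0⟩ := aux_exists_sparse r m hr hm
  refine ⟨T0.choose r, ?_⟩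
  intro n e he1 he2 hPA
  have hex : ∃ t : ℕ, e ≤ t.choose r := ⟨n, he2⟩
  set t := Nat.find hex with htdef
  have htc : e ≤ t.choose r := Nat.find_spec hex
  have htn : t ≤ n := Nat.find_min' hex he2
  have htT0 : T0 < t := by
    by_contra hcon
    push_neg at hcon
    have : t.choose r ≤ T0.choose r := Nat.choose_le_choose r hcon
    omega
  have hprev : ¬ e ≤ (t-1).choose r := Nat.find_min hex (by omega)
  have hrec : t.choose r = (t-1).choose (r-1) + (t-1).choose r := by
    have := Nat.choose_succ_succ (t-1) (r-1)
    rw [show (t-1).succ = t by omega, show (r-1).succ = r by omega] at this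
    exact this
  set d := t.choose r - e with hd
  have hdgap : d ≤ (t-1).choose (r-1) := by omega
  -- choose the vertex set T
  obtain ⟨T, _, hTcard⟩ := Finset.exists_subset_card_eq
    (show t ≤ (Finset.univ : Finset (Fin n)).card by simp [htn])
  obtain ⟨H, hHsub, hHcard, hHsparse⟩ := hT0 t (by omega) d hdgap n T hTcard
  set G := T.powersetCard r \ H with hG
  have hGunif : ∀ s ∈ G, s.card = r := by
    intro s hs
    rw [hG, mem_sdiff, mem_powersetCard] at hs
    exact hs.1.2
  have hGcard : G.card = e := by
    rw [hG, card_sdiff_of_subset hHsub, card_powersetCard, hTcard, hHcard]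
    omega
  obtain ⟨S, hScard, hSf⟩ := hPA G hGunif hGcard
  -- compute the number of edges inside S
  set x := (S ∩ T).card with hx
  have hxm : x ≤ m := by
    rw [hx]
    exact le_trans (card_le_card inter_subset_left) (le_of_eq hScard)
  have key1 : (T.powersetCard r).filter (fun A => A ⊆ S) = (S ∩ T).powersetCard r := by
    ext A
    simp only [mem_filter, mem_powersetCard, subset_inter_iff]
    tauto
  have key2 : G.filter (fun A => A ⊆ S)
      = (T.powersetCard r).filter (fun A => A ⊆ S) \ H.filter (fun A => A ⊆ S) := by
    rw [hG]
    ext A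
    simp only [mem_filter, mem_sdiff]
    tauto
  have hsub2 : H.filter (fun A => A ⊆ S) ⊆ (T.powersetCard r).filter (fun A => A ⊆ S) :=
    filter_subset_filter _ hHsub
  have hcount : f = x.choose r - (H.filter (fun A => A ⊆ S)).card := by
    rw [← hSf, key2, card_sdiff_of_subset hsub2, key1, card_powersetCard]
  have hle : (H.filter (fun A => A ⊆ S)).card ≤ x.choose r := by
    have := card_le_card hsub2
    rw [key1, card_powersetCard] at this
    exact this
  have hsp : (H.filter (fun A => A ⊆ S)).card < m := hHsparse S (le_of_eq hScard)
  rcases hyp x hxm with hlt | hge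
  · omega
  · omega

theorem sigma_zero_of_not_coCliqueFew (r m f : ℕ) (hr : 3 ≤ r) (hm : r ≤ m)
    (hf : f ≤ m.choose r) :
    (¬ CoCliqueFew r m f → sigmaR r m f = 0) ∧
    ((¬ ∃ x ≤ m, f ≤ x.choose r ∧ x.choose r < f + m) → sigmaR r m f = 0) := by
  classical
  have master : (∀ x, x ≤ m → x.choose r < f ∨ f + m ≤ x.choose r) → sigmaR r m f = 0 := by
    intro hyp
    obtain ⟨E0, hE0⟩ := aux_not_arrows r m f hr hm hyp
    have hcount : ∀ n : ℕ, (((Finset.range (n.choose r + 1)).filter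
        (fun e => PairArrows r n e m f)).card) ≤ E0 + 1 := by
      intro n
      have hsub : (Finset.range (n.choose r + 1)).filter (fun e => PairArrows r n e m f)
          ⊆ Finset.range (E0 + 1) := by
        intro e he
        rw [mem_filter, mem_range] at he
        rw [mem_range]
        by_contra hcon
        push_neg at hcon
        exact hE0 n e (by omega) (by omega) he.2
      simpa using card_le_card hsub
    have hnat : Filter.Tendsto (fun n : ℕ => n.choose r) Filter.atTop Filter.atTop := by
      apply Filter.tendsto_atTop_atTop_of_monotone (Nat.choose_mono r)
      intro b
      refine ⟨b + r, ?_⟩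
      have h1 : ((b + r) - (r-1)).choose (r - (r-1)) ≤ (b + r).choose r :=
        aux_choose_sub_le (b + r) r (r-1) (by omega) (by omega)
      rw [show (b+r) - (r-1) = b + 1 by omega, show r - (r-1) = 1 by omega,
        Nat.choose_one_right] at h1
      omega
    have hchoose : Filter.Tendsto (fun n : ℕ => (n.choose r : ℝ))
        Filter.atTop Filter.atTop :=
      Filter.Tendsto.comp tendsto_natCast_atTop_atTop hnat
    have h0 : Filter.Tendsto (fun n : ℕ => ((E0 + 1 : ℕ) : ℝ) / (n.choose r : ℝ))
        Filter.atTop (nhds 0) :=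
      Filter.Tendsto.div_atTop tendsto_const_nhds hchoose
    have hbound : ∀ n : ℕ,
        ((((Finset.range (n.choose r + 1)).filter (fun e => PairArrows r n e m f)).card : ℝ) /
          (n.choose r : ℝ)) ≤ ((E0 + 1 : ℕ) : ℝ) / (n.choose r : ℝ) := by
      intro n
      rcases Nat.eq_zero_or_pos (n.choose r) with hz | hpos
      · rw [hz]; simp
      · rw [div_le_div_iff_of_pos_right (by exact_mod_cast hpos)]
        exact_mod_cast hcount n
    have htend := squeeze_zero (fun n => by positivity) hbound h0
    exact htend.limsup_eq
  constructor
  · intro hncc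
    apply master
    intro x hx
    by_contra hcon
    push_neg at hcon
    obtain ⟨h1, h2⟩ := hcon
    apply hncc
    obtain ⟨Kx, hKsub, hKcard⟩ := Finset.exists_subset_card_eq
      (show x ≤ (Finset.univ : Finset (Fin m)).card by simp [hx])
    obtain ⟨Hx, hHsub, hHcard⟩ := Finset.exists_subset_card_eq
      (show x.choose r - f ≤ (Kx.powersetCard r).card by
        rw [card_powersetCard, hKcard]; omega)
    exact ⟨Kx, Hx, hHsub, by omega, by rw [hKcard, hHcard]; omega⟩
  · intro hnex
    apply master
    intro x hx
    push_neg at hnex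
    by_cases hc : f ≤ x.choose r
    · right; exact hnex x hx hc
    · left; omega
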